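/- Let k ≥ 1 and let Λ be a row-finite k-graph without sources. Then Iso(G_Λ)° = {(x,p−q,x) ∈ G_Λ : p,q ∈ ℕ^k, σ^p(x) = σ^q(x), and (x(p),x(q)) is a cycline pair}. -/

import Mathlib

/-- A `k`-graph: a small category `Λ` (morphisms in `Hom a b` have range `a` and
source `b`, composed path-wise) with a degree functor `d : Λ → ℕ^k` satisfying the
factorization property. -/
structure KGraph (k : ℕ) where
  Obj : Type
  Hom : Obj → Obj → Type
  id : ∀ a : Obj, Hom a a
  comp : ∀ {a b c : Obj}, Hom a b → Hom b c → Hom a c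
  id_comp : ∀ {a b : Obj} (f : Hom a b), comp (id a) f = f
  comp_id : ∀ {a b : Obj} (f : Hom a b), comp f (id b) = f
  assoc : ∀ {a b c e : Obj} (f : Hom a b) (g : Hom b c) (h : Hom c e),
    comp (comp f g) h = comp f (comp g h)
  d : ∀ {a b : Obj}, Hom a b → (Fin k → ℕ)
  d_id : ∀ a : Obj, d (id a) = 0
  d_comp : ∀ {a b c : Obj} (f : Hom a b) (g : Hom b c), d (comp f g) = d f + d g
  factor : ∀ {a b : Obj} (f : Hom a b) (m n : Fin k → ℕ), d f = m + n →
    ∃! t : Σ c : Obj, Hom a c × Hom c b,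
      d t.2.1 = m ∧ d t.2.2 = n ∧ comp t.2.1 t.2.2 = f

namespace KGraph

variable {k : ℕ} (Λ : KGraph k)

/-- `Λ` is row-finite: `vΛ^n` is finite for every vertex `v` and degree `n`. -/
def RowFinite : Prop :=
  ∀ (v : Λ.Obj) (n : Fin k → ℕ), Finite {t : Σ w : Λ.Obj, Λ.Hom v w // Λ.d t.2 = n}

/-- `Λ` has no sources: `vΛ^n ≠ ∅` for every vertex `v` and degree `n`. -/
def NoSources : Prop :=
  ∀ (v : Λ.Obj) (n : Fin k → ℕ), ∃ (w : Λ.Obj) (μ : Λ.Hom v w), Λ.d μ = n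

/-- An infinite path of `Λ`: a degree-preserving functor from `Ω_k` to `Λ`. -/
structure InfPath where
  vert : (Fin k → ℕ) → Λ.Obj
  seg : ∀ p q : Fin k → ℕ, p ≤ q → Λ.Hom (vert p) (vert q)
  seg_id : ∀ p : Fin k → ℕ, seg p p le_rfl = Λ.id (vert p)
  seg_comp : ∀ (p q r : Fin k → ℕ) (h1 : p ≤ q) (h2 : q ≤ r),
    Λ.comp (seg p q h1) (seg q r h2) = seg p r (le_trans h1 h2)
  seg_deg : ∀ (p q : Fin k → ℕ) (h : p ≤ q), Λ.d (seg p q h) = q - p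

/-- The shift `σ^p` on infinite paths. -/
def shift (p : Fin k → ℕ) (x : Λ.InfPath) : Λ.InfPath where
  vert q := x.vert (p + q)
  seg q q' h := x.seg (p + q) (p + q') (add_le_add_right h p)
  seg_id q := x.seg_id (p + q)
  seg_comp q q' q'' h1 h2 := x.seg_comp (p + q) (p + q') (p + q'') _ _
  seg_deg q q' h := by
    rw [x.seg_deg]
    funext i
    simp only [Pi.sub_apply, Pi.add_apply]
    omega

/-- `y = μ x` : the infinite path `y` is the concatenation of the finite path `μ`
with the infinite path `x`. -/
def IsPrepend {a b : Λ.Obj} (μ : Λ.Hom a b) (x y : Λ.InfPath) : Prop :=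
  x.vert 0 = b ∧ y.vert 0 = a ∧ Λ.shift (Λ.d μ) y = x ∧
    HEq (y.seg 0 (Λ.d μ) (fun _ => Nat.zero_le _)) μ

/-- `(μ, ν)` is a cycline pair: `s(μ) = s(ν)` and `μ x = ν x` for every infinite
path `x` with `x(0) = s(μ)`. -/
def Cycline {a v b w : Λ.Obj} (μ : Λ.Hom a v) (ν : Λ.Hom b w) : Prop :=
  v = w ∧ ∀ x y z : Λ.InfPath, Λ.IsPrepend μ x y → Λ.IsPrepend ν x z → y = z

/-- The cylinder set `Z(μ) ⊆ Λ^∞`. -/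
def cylZ {a b : Λ.Obj} (μ : Λ.Hom a b) : Set Λ.InfPath :=
  {y | HEq (y.seg 0 (Λ.d μ) (fun _ => Nat.zero_le _)) μ}

/-- The topology on `Λ^∞` generated by the cylinder sets `Z(μ)`. -/
instance : TopologicalSpace Λ.InfPath :=
  TopologicalSpace.generateFrom
    {S | ∃ (a b : Λ.Obj) (μ : Λ.Hom a b), S = Λ.cylZ μ}

/-- The path groupoid `G_Λ` as a set. -/
def PathGroupoid : Type :=
  {g : Λ.InfPath × (Fin k → ℤ) × Λ.InfPath //
    ∃ p q : Fin k → ℕ, (∀ i, g.2.1 i = (p i : ℤ) - (q i : ℤ)) ∧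
      Λ.shift p g.1 = Λ.shift q g.2.2}

/-- The basic set `Z(μ, ν) ⊆ G_Λ` for `μ, ν` with common source. -/
def ZZ {a b v : Λ.Obj} (μ : Λ.Hom a v) (ν : Λ.Hom b v) : Set Λ.PathGroupoid :=
  {g | ∃ x : Λ.InfPath, Λ.IsPrepend μ x g.1.1 ∧ Λ.IsPrepend ν x g.1.2.2 ∧
    ∀ i, g.1.2.1 i = (Λ.d μ i : ℤ) - (Λ.d ν i : ℤ)}

/-- The topology on `G_Λ` generated by the sets `Z(μ, ν)`. -/
instance : TopologicalSpace Λ.PathGroupoid :=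
  TopologicalSpace.generateFrom
    {S | ∃ (a b v : Λ.Obj) (μ : Λ.Hom a v) (ν : Λ.Hom b v), S = Λ.ZZ μ ν}

/-- The isotropy group bundle `Iso(G_Λ)`. -/
def isoSet : Set Λ.PathGroupoid := {g | g.1.1 = g.1.2.2}

/-- The set `Λ^∞_{p,q}` of Notation 4.4. -/
def LambdaPQ (p q : Fin k → ℕ) : Set Λ.InfPath :=
  {x | Λ.shift p x = Λ.shift q x ∧
    ∀ m : Fin k → ℕ,
      ¬ Λ.Cycline (x.seg 0 (p + m) (fun _ => Nat.zero_le _))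
          (x.seg 0 (q + m) (fun _ => Nat.zero_le _)) ∧
      ∃ (c : Λ.Obj) (μ : Λ.Hom (x.vert (p + m)) c) (ν : Λ.Hom (x.vert (q + m)) c),
        HEq μ ν ∧
        Λ.Cycline (Λ.comp (x.seg 0 (p + m) (fun _ => Nat.zero_le _)) μ)
          (Λ.comp (x.seg 0 (q + m) (fun _ => Nat.zero_le _)) ν)}

section Aux

theorem zle {k : ℕ} (p : Fin k → ℕ) : (0 : Fin k → ℕ) ≤ p := fun _ => Nat.zero_le _

theorem heq_ext {a a' c c' b b' : Λ.Obj} (ea : a = a') (ec : c = c')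
    {f : Λ.Hom a c} {f' : Λ.Hom a' c'} (hf : HEq f f')
    (g : Λ.Hom a b) (h : Λ.Hom b c) (g' : Λ.Hom a' b') (h' : Λ.Hom b' c')
    (hg : Λ.d g = Λ.d g') (hc : Λ.comp g h = f) (hc' : Λ.comp g' h' = f') :
    b = b' ∧ HEq g g' ∧ HEq h h' := by
  subst ea; subst ec
  have hff : f = f' := eq_of_heq hf
  subst hff
  obtain ⟨t, -, hu⟩ := Λ.factor f (Λ.d g) (Λ.d h) (by rw [← hc, Λ.d_comp])
  have hdh : Λ.d h' = Λ.d h := by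
    have h2 : Λ.d g + Λ.d h = Λ.d g' + Λ.d h' := by
      rw [← Λ.d_comp, ← Λ.d_comp, hc, hc']
    rw [hg] at h2
    exact (add_left_cancel h2).symm
  have e1 : (⟨b, g, h⟩ : Σ c0 : Λ.Obj, Λ.Hom a c0 × Λ.Hom c0 c) = t := hu _ ⟨rfl, rfl, hc⟩
  have e2 : (⟨b', g', h'⟩ : Σ c0 : Λ.Obj, Λ.Hom a c0 × Λ.Hom c0 c) = t := hu _ ⟨hg.symm, hdh, hc'⟩
  rw [← e2] at e1
  obtain ⟨hb, hpair⟩ := Sigma.mk.inj_iff.mp e1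
  subst hb
  have hpp := eq_of_heq hpair
  exact ⟨rfl, heq_of_eq (congrArg Prod.fst hpp), heq_of_eq (congrArg Prod.snd hpp)⟩

theorem seg_congr (x : Λ.InfPath) {p p' q q' : Fin k → ℕ} (hp : p = p') (hq : q = q')
    (h : p ≤ q) (h' : p' ≤ q') : HEq (x.seg p q h) (x.seg p' q' h') := by
  subst hp; subst hq; rfl

theorem d_seg0 (x : Λ.InfPath) (p : Fin k → ℕ) (h : (0 : Fin k → ℕ) ≤ p) :
    Λ.d (x.seg 0 p h) = p := by
  rw [x.seg_deg]; funext i; simp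

theorem comp_heq {a a' b b' c c' : Λ.Obj} (ea : a = a') (eb : b = b') (ec : c = c')
    {f : Λ.Hom a b} {f' : Λ.Hom a' b'} {g : Λ.Hom b c} {g' : Λ.Hom b' c'}
    (hf : HEq f f') (hg : HEq g g') : HEq (Λ.comp f g) (Λ.comp f' g') := by
  subst ea; subst eb; subst ec; rw [eq_of_heq hf, eq_of_heq hg]

theorem InfPath.ext' {u₁ u₂ : Λ.InfPath} (hv : u₁.vert = u₂.vert)
    (hs : ∀ p q (h : p ≤ q), HEq (u₁.seg p q h) (u₂.seg p q h)) : u₁ = u₂ := by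
  obtain ⟨v1, s1, _, _, _⟩ := u₁
  obtain ⟨v2, s2, _, _, _⟩ := u₂
  dsimp at hv hs
  subst hv
  have hss : s1 = s2 := by
    funext p q h
    exact eq_of_heq (hs p q h)
  subst hss
  rfl

theorem shift_vert0 (x : Λ.InfPath) (p : Fin k → ℕ) :
    (Λ.shift p x).vert 0 = x.vert p := rfl

theorem shift_congr (x : Λ.InfPath) {p p' : Fin k → ℕ} (h : p = p') :
    Λ.shift p x = Λ.shift p' x := by subst h; rfl

theorem shift_shift (x : Λ.InfPath) (p r : Fin k → ℕ) :
    Λ.shift r (Λ.shift p x) = Λ.shift (p + r) x := by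
  apply InfPath.ext'
  · funext n
    show x.vert (p + (r + n)) = x.vert (p + r + n)
    rw [add_assoc]
  · intro a b h
    exact seg_congr Λ x (by rw [add_assoc]) (by rw [add_assoc]) _ _

end Aux
section Aux2

theorem extend (y w : Λ.InfPath) (p p' : Fin k → ℕ) (hle : p ≤ p')
    (h0 : w.vert 0 = y.vert 0) (hp' : w.vert p' = y.vert p')
    (hseg : HEq (w.seg 0 p' (zle p')) (y.seg 0 p' (zle p'))) :
    w.vert p = y.vert p ∧ HEq (w.seg 0 p (zle p)) (y.seg 0 p (zle p)) ∧
      HEq (w.seg p p' hle) (y.seg p p' hle) :=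
  heq_ext Λ h0 hp' hseg (w.seg 0 p (zle p)) (w.seg p p' hle)
    (y.seg 0 p (zle p)) (y.seg p p' hle)
    (by rw [d_seg0, d_seg0])
    (w.seg_comp 0 p p' (zle p) hle) (y.seg_comp 0 p p' (zle p) hle)

theorem path_eq (u₁ u₂ : Λ.InfPath) (r : Fin k → ℕ)
    (hsh : Λ.shift r u₁ = Λ.shift r u₂)
    (h0 : u₁.vert 0 = u₂.vert 0) (hr : u₁.vert r = u₂.vert r)
    (hseg : HEq (u₁.seg 0 r (zle r)) (u₂.seg 0 r (zle r))) : u₁ = u₂ := by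
  have main : ∀ N, r ≤ N →
      u₁.vert N = u₂.vert N ∧ HEq (u₁.seg 0 N (zle N)) (u₂.seg 0 N (zle N)) := by
    intro N hN
    have hrN : r + (N - r) = N := by
      funext i
      simp only [Pi.add_apply, Pi.sub_apply]
      have h5 : r i ≤ N i := hN i
      omega
    have hv : u₁.vert N = u₂.vert N := by
      have e1 : (Λ.shift r u₁).vert (N - r) = (Λ.shift r u₂).vert (N - r) := by rw [hsh]
      calc u₁.vert N = u₁.vert (r + (N - r)) := congrArg _ hrN.symm
        _ = u₂.vert (r + (N - r)) := e1
        _ = u₂.vert N := congrArg _ hrN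
    have hmid : HEq (u₁.seg r N hN) (u₂.seg r N hN) := by
      have e2 : HEq ((Λ.shift r u₁).seg 0 (N - r) (zle _)) ((Λ.shift r u₂).seg 0 (N - r) (zle _)) := by
        rw [hsh]
      have a1 : HEq (u₁.seg r N hN) (u₁.seg r (r + (N - r)) (by rw [hrN]; exact hN)) :=
        seg_congr Λ u₁ rfl hrN.symm _ _
      have a3 : HEq (u₂.seg r (r + (N - r)) (by rw [hrN]; exact hN)) (u₂.seg r N hN) :=
        seg_congr Λ u₂ rfl hrN _ _
      exact a1.trans (e2.trans a3)
    have hs : HEq (u₁.seg 0 N (zle N)) (u₂.seg 0 N (zle N)) := by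
      have c1 : Λ.comp (u₁.seg 0 r (zle r)) (u₁.seg r N hN) = u₁.seg 0 N (zle N) :=
        u₁.seg_comp 0 r N (zle r) hN
      have c2 : Λ.comp (u₂.seg 0 r (zle r)) (u₂.seg r N hN) = u₂.seg 0 N (zle N) :=
        u₂.seg_comp 0 r N (zle r) hN
      exact (heq_of_eq c1.symm).trans ((comp_heq Λ h0 hr hv hseg hmid).trans (heq_of_eq c2))
    exact ⟨hv, hs⟩
  have key : ∀ s t (h : s ≤ t), u₁.vert t = u₂.vert t ∧ HEq (u₁.seg s t h) (u₂.seg s t h) := by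
    intro s t h
    have h1 : r ≤ (fun i => max (t i) (r i)) := fun i => le_max_right _ _
    have h2 : t ≤ (fun i => max (t i) (r i)) := fun i => le_max_left _ _
    obtain ⟨hvN, hsN⟩ := main _ h1
    obtain ⟨hvt, hst, -⟩ := extend Λ u₂ u₁ t _ h2 h0 hvN hsN
    obtain ⟨hvs, -, hs2⟩ := extend Λ u₂ u₁ s t h h0 hvt hst
    exact ⟨hvt, hs2⟩
  apply InfPath.ext' Λ
  · funext n
    exact (key n n le_rfl).1
  · intro p q h
    exact (key p q h).2

end Aux2
section Aux3

theorem prepend_props {y z w : Λ.InfPath} {p : Fin k → ℕ}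
    (hpre : Λ.IsPrepend (y.seg 0 p (zle p)) z w) :
    w.vert 0 = y.vert 0 ∧ w.vert p = y.vert p ∧
      HEq (w.seg 0 p (zle p)) (y.seg 0 p (zle p)) ∧ Λ.shift p w = z := by
  obtain ⟨h1, h2, h3, h4⟩ := hpre
  have hd : Λ.d (y.seg 0 p (zle p)) = p := d_seg0 Λ _ _ _
  rw [hd] at h3
  have h4' : HEq (w.seg 0 p (zle p)) (y.seg 0 p (zle p)) :=
    (seg_congr Λ w rfl hd.symm _ _).trans h4
  have hvp : w.vert p = y.vert p := by
    have e : (Λ.shift p w).vert 0 = z.vert 0 := by rw [h3]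
    exact e.trans h1
  exact ⟨h2, hvp, h4', h3⟩

theorem prepend_seg {y w : Λ.InfPath} {p p' : Fin k → ℕ} (hle : p ≤ p')
    (h0 : w.vert 0 = y.vert 0) (hp' : w.vert p' = y.vert p')
    (hs : HEq (w.seg 0 p' (zle p')) (y.seg 0 p' (zle p'))) :
    Λ.IsPrepend (y.seg 0 p (zle p)) (Λ.shift p w) w := by
  obtain ⟨hv, hseg, -⟩ := extend Λ y w p p' hle h0 hp' hs
  have hd : Λ.d (y.seg 0 p (zle p)) = p := d_seg0 Λ _ _ _
  refine ⟨hv, h0, ?_, ?_⟩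
  · rw [hd]
  · exact (seg_congr Λ w rfl hd _ _).trans hseg

theorem prepend_self (y : Λ.InfPath) (p : Fin k → ℕ) :
    Λ.IsPrepend (y.seg 0 p (zle p)) (Λ.shift p y) y :=
  prepend_seg Λ le_rfl rfl rfl HEq.rfl

theorem isPrepend_congr {a a' b b' : Λ.Obj} (ea : a = a') (eb : b = b')
    {μ : Λ.Hom a b} {μ' : Λ.Hom a' b'} (h : HEq μ μ') {x y : Λ.InfPath} :
    Λ.IsPrepend μ x y ↔ Λ.IsPrepend μ' x y := by
  subst ea; subst eb; rw [eq_of_heq h]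

theorem d_heq {a a' b b' : Λ.Obj} (ea : a = a') (eb : b = b')
    {μ : Λ.Hom a b} {μ' : Λ.Hom a' b'} (h : HEq μ μ') : Λ.d μ = Λ.d μ' := by
  subst ea; subst eb; rw [eq_of_heq h]

theorem common_shift {y w w' : Λ.InfPath} {p q r : Fin k → ℕ}
    (hsh : Λ.shift p y = Λ.shift q y)
    (hw0 : w.vert 0 = y.vert 0) (hwp : w.vert (p + r) = y.vert (p + r))
    (hwseg : HEq (w.seg 0 (p + r) (zle _)) (y.seg 0 (p + r) (zle _)))
    (hw'0 : w'.vert 0 = y.vert 0) (hw'q : w'.vert (q + r) = y.vert (q + r))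
    (hw'seg : HEq (w'.seg 0 (q + r) (zle _)) (y.seg 0 (q + r) (zle _)))
    (hz : Λ.shift (p + r) w = Λ.shift (q + r) w') :
    Λ.shift p w = Λ.shift q w' := by
  have hlep : p ≤ p + r := le_add_of_nonneg_right (zle r)
  have hleq : q ≤ q + r := le_add_of_nonneg_right (zle r)
  obtain ⟨hvp, -, hsegp⟩ := extend Λ y w p (p + r) hlep hw0 hwp hwseg
  obtain ⟨hvq, -, hsegq⟩ := extend Λ y w' q (q + r) hleq hw'0 hw'q hw'seg
  have hy0 : y.vert p = y.vert q := congrArg (fun u => KGraph.InfPath.vert u 0) hsh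
  have hyr : y.vert (p + r) = y.vert (q + r) := congrArg (fun u => KGraph.InfPath.vert u r) hsh
  apply path_eq Λ _ _ r
  · rw [shift_shift, shift_shift]
    exact hz
  · exact (hvp.trans hy0).trans hvq.symm
  · show w.vert (p + r) = w'.vert (q + r)
    exact (hwp.trans hyr).trans hw'q.symm
  · -- HEq ((shift p w).seg 0 r _) ((shift q w').seg 0 r _)
    have e2 : HEq ((Λ.shift p y).seg 0 r (zle r)) ((Λ.shift q y).seg 0 r (zle r)) := by rw [hsh]
    exact hsegp.trans (e2.trans hsegq.symm)



theorem common_shift' {y w w' : Λ.InfPath} {p q r p' q' : Fin k → ℕ}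
    (hpr : p + r = p') (hqr : q + r = q')
    (hsh : Λ.shift p y = Λ.shift q y)
    (hw0 : w.vert 0 = y.vert 0) (hwp : w.vert p' = y.vert p')
    (hwseg : HEq (w.seg 0 p' (zle _)) (y.seg 0 p' (zle _)))
    (hw'0 : w'.vert 0 = y.vert 0) (hw'q : w'.vert q' = y.vert q')
    (hw'seg : HEq (w'.seg 0 q' (zle _)) (y.seg 0 q' (zle _)))
    (hz : Λ.shift p' w = Λ.shift q' w') :
    Λ.shift p w = Λ.shift q w' := by
  subst hpr; subst hqr
  exact common_shift Λ hsh hw0 hwp hwseg hw'0 hw'q hw'seg hz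
end Aux3
end KGraph

open KGraph in
/-- Lemma 4.2: the interior of `Iso(G_Λ)` consists exactly of the elements
`(x, p - q, x)` with `σ^p(x) = σ^q(x)` and `(x(p), x(q))` a cycline pair. -/
theorem stmt11 {k : ℕ} (hk : 1 ≤ k) (Λ : KGraph k)
    [Countable Λ.Obj] [Countable (Σ a b : Λ.Obj, Λ.Hom a b)]
    (hrow : Λ.RowFinite) (hns : Λ.NoSources) :
    interior Λ.isoSet =
      {g : Λ.PathGroupoid | g.1.1 = g.1.2.2 ∧
        ∃ p q : Fin k → ℕ,
          (∀ i, g.1.2.1 i = (p i : ℤ) - (q i : ℤ)) ∧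
          Λ.shift p g.1.1 = Λ.shift q g.1.1 ∧
          Λ.Cycline (g.1.1.seg 0 p (fun _ => Nat.zero_le _))
            (g.1.1.seg 0 q (fun _ => Nat.zero_le _))} := by
  classical
  have hb := TopologicalSpace.isTopologicalBasis_of_subbasis
    (s := {S | ∃ (a b v : Λ.Obj) (μ : Λ.Hom a v) (ν : Λ.Hom b v), S = Λ.ZZ μ ν}) rfl
  apply Set.eq_of_subset_of_subset
  · -- interior ⊆ description
    intro g hg
    rw [mem_interior_iff_mem_nhds, hb.mem_nhds_iff] at hg
    obtain ⟨t, ⟨f, ⟨hfin, hsub⟩, rfl⟩, hgf, hiso⟩ := hg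
    have hyy : g.1.1 = g.1.2.2 := hiso hgf
    obtain ⟨p₀, q₀, hm₀, hsh₀⟩ := g.2
    rw [← hyy] at hsh₀
    refine ⟨hyy, ?_⟩
    have claim : ∀ fs : Set (Set Λ.PathGroupoid), fs.Finite →
        fs ⊆ {S | ∃ (a b v : Λ.Obj) (μ : Λ.Hom a v) (ν : Λ.Hom b v), S = Λ.ZZ μ ν} →
        g ∈ ⋂₀ fs →
        ∃ p q : Fin k → ℕ, (∀ i, (p i : ℤ) - q i = (p₀ i : ℤ) - q₀ i) ∧
          Λ.shift p g.1.1 = Λ.shift q g.1.1 ∧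
          ∀ S ∈ fs, ∀ z w w' : Λ.InfPath,
            Λ.IsPrepend (g.1.1.seg 0 p (zle p)) z w →
            Λ.IsPrepend (g.1.1.seg 0 q (zle q)) z w' →
            ∀ gel : Λ.PathGroupoid, gel.1.1 = w → gel.1.2.1 = g.1.2.1 → gel.1.2.2 = w' →
              gel ∈ S := by
      intro fs hfin
      refine Set.Finite.induction_on fs hfin ?_ ?_
      · intro _ _
        exact ⟨p₀, q₀, fun i => rfl, hsh₀, fun S hS => absurd hS (Set.notMem_empty S)⟩
      · rintro S₀ fs' hnm hfin' ih hsub' hgmem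
        obtain ⟨p, q, hrel, hshpq, hprop⟩ :=
          ih (fun t ht => hsub' (Set.mem_insert_of_mem _ ht))
            (fun t ht => hgmem t (Set.mem_insert_of_mem _ ht))
        have hS₀mem : g ∈ S₀ := hgmem S₀ (Set.mem_insert _ _)
        obtain ⟨a, b, v, μ, ν, rfl⟩ := hsub' (Set.mem_insert _ _)
        obtain ⟨z, hpreμ, hpreν, hdeg⟩ := hS₀mem
        rw [← hyy] at hpreν
        obtain ⟨hμ1, hμ2, hμ3, hμ4⟩ := hpreμ
        obtain ⟨hν1, hν2, hν3, hν4⟩ := hpreν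
        set pS := Λ.d μ with hpSdef
        set qS := Λ.d ν with hqSdef
        have hshS : Λ.shift pS g.1.1 = Λ.shift qS g.1.1 := hμ3.trans hν3.symm
        have hvpS : g.1.1.vert pS = v :=
          (congrArg (fun u : Λ.InfPath => u.vert 0) hμ3).trans hμ1
        have hvqS : g.1.1.vert qS = v :=
          (congrArg (fun u : Λ.InfPath => u.vert 0) hν3).trans hν1
        set p' : Fin k → ℕ := fun i => max (p i) (pS i) with hp'def
        set q' : Fin k → ℕ := fun i => max (q i) (qS i) with hq'def
        have hrelS : ∀ i, (pS i : ℤ) - qS i = (p₀ i : ℤ) - q₀ i := by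
          intro i
          have h1 := hdeg i
          have h2 := hm₀ i
          omega
        have hpp' : p ≤ p' := fun i => le_max_left _ _
        have hSp' : pS ≤ p' := fun i => le_max_right _ _
        have hqq' : q ≤ q' := fun i => le_max_left _ _
        have hSq' : qS ≤ q' := fun i => le_max_right _ _
        have hrel' : ∀ i, (p' i : ℤ) - q' i = (p₀ i : ℤ) - q₀ i := by
          intro i
          have h1 := hrel i
          have h2 := hrelS i
          simp only [hp'def, hq'def]
          omega
        have hadd1 : p + (p' - p) = p' := by
          funext i
          have hx : p i ≤ p' i := hpp' i
          simp only [Pi.add_apply, Pi.sub_apply]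
          omega
        have hadd2 : q + (p' - p) = q' := by
          funext i
          have h1 := hrel i
          have h2 := hrel' i
          have h3 : p i ≤ p' i := hpp' i
          have h4 : q i ≤ q' i := hqq' i
          simp only [Pi.add_apply, Pi.sub_apply]
          omega
        have hadd3 : pS + (p' - pS) = p' := by
          funext i
          have hx : pS i ≤ p' i := hSp' i
          simp only [Pi.add_apply, Pi.sub_apply]
          omega
        have hadd4 : qS + (p' - pS) = q' := by
          funext i
          have h1 := hrelS i
          have h2 := hrel' i
          have h3 : pS i ≤ p' i := hSp' i
          have h4 : qS i ≤ q' i := hSq' i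
          simp only [Pi.add_apply, Pi.sub_apply]
          omega
        have hshift' : Λ.shift p' g.1.1 = Λ.shift q' g.1.1 := by
          calc Λ.shift p' g.1.1 = Λ.shift (p + (p' - p)) g.1.1 :=
                shift_congr Λ _ hadd1.symm
            _ = Λ.shift (p' - p) (Λ.shift p g.1.1) := (shift_shift Λ _ _ _).symm
            _ = Λ.shift (p' - p) (Λ.shift q g.1.1) := by rw [hshpq]
            _ = Λ.shift (q + (p' - p)) g.1.1 := shift_shift Λ _ _ _
            _ = Λ.shift q' g.1.1 := shift_congr Λ _ hadd2
        refine ⟨p', q', hrel', hshift', ?_⟩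
        intro S hS z₂ w w' hw hw' gel h1 h2 h3
        subst h1; subst h3
        obtain ⟨hw0, hwp', hwseg, hwsh⟩ := prepend_props Λ hw
        obtain ⟨hw'0, hw'q', hw'seg, hw'sh⟩ := prepend_props Λ hw'
        rcases Set.mem_insert_iff.mp hS with rfl | hSold
        · -- the new basic set Z(μ, ν)
          have hpre1 : Λ.IsPrepend (g.1.1.seg 0 pS (zle pS)) (Λ.shift pS gel.1.1) gel.1.1 :=
            prepend_seg Λ hSp' hw0 hwp' hwseg
          have hpre2 : Λ.IsPrepend (g.1.1.seg 0 qS (zle qS)) (Λ.shift qS gel.1.2.2) gel.1.2.2 :=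
            prepend_seg Λ hSq' hw'0 hw'q' hw'seg
          have hcs : Λ.shift pS gel.1.1 = Λ.shift qS gel.1.2.2 :=
            common_shift' Λ hadd3 hadd4 hshS hw0 hwp' hwseg hw'0 hw'q' hw'seg
              (hwsh.trans hw'sh.symm)
          refine ⟨Λ.shift pS gel.1.1, ?_, ?_, ?_⟩
          · exact (isPrepend_congr Λ hμ2 hvpS hμ4).mp hpre1
          · rw [hcs]
            exact (isPrepend_congr Λ hν2 hvqS hν4).mp hpre2
          · intro i
            rw [h2]
            exact hdeg i
        · -- an old basic set, via monotone transfer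
          have hpre1 : Λ.IsPrepend (g.1.1.seg 0 p (zle p)) (Λ.shift p gel.1.1) gel.1.1 :=
            prepend_seg Λ hpp' hw0 hwp' hwseg
          have hpre2 : Λ.IsPrepend (g.1.1.seg 0 q (zle q)) (Λ.shift q gel.1.2.2) gel.1.2.2 :=
            prepend_seg Λ hqq' hw'0 hw'q' hw'seg
          have hcs : Λ.shift p gel.1.1 = Λ.shift q gel.1.2.2 :=
            common_shift' Λ hadd1 hadd2 hshpq hw0 hwp' hwseg hw'0 hw'q' hw'seg
              (hwsh.trans hw'sh.symm)
          rw [← hcs] at hpre2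
          exact hprop S hSold (Λ.shift p gel.1.1) gel.1.1 gel.1.2.2 hpre1 hpre2 gel rfl h2 rfl
    obtain ⟨p, q, hrel, hshpq, hprop⟩ := claim f hfin hsub hgf
    refine ⟨p, q, ?_, hshpq, ?_, ?_⟩
    · intro i
      have h1 := hm₀ i
      have h2 := hrel i
      omega
    · exact congrArg (fun u : Λ.InfPath => u.vert 0) hshpq
    · intro x w w' h1 h2
      have props := prepend_props Λ h1
      have props' := prepend_props Λ h2
      have hmw : Λ.shift p w = Λ.shift q w' := props.2.2.2.trans props'.2.2.2.symm
      set gel : Λ.PathGroupoid :=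
        ⟨(w, g.1.2.1, w'), p, q, fun i => by
          show g.1.2.1 i = (p i : ℤ) - q i
          have h3 := hm₀ i
          have h4 := hrel i
          omega, hmw⟩ with hgel
      have hmem : gel ∈ ⋂₀ f := fun S hS => hprop S hS x w w' h1 h2 gel rfl rfl rfl
      exact hiso hmem
  · -- description ⊆ interior
    rintro g ⟨hyy, p, q, hdeg, hshpq, hcyc⟩
    have e : g.1.1.vert p = g.1.1.vert q := hcyc.1
    set ν' : Λ.Hom (g.1.1.vert 0) (g.1.1.vert p) :=
      cast (congrArg (Λ.Hom (g.1.1.vert 0)) e.symm) (g.1.1.seg 0 q (zle q)) with hν'def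
    have hν'heq : HEq ν' (g.1.1.seg 0 q (zle q)) := cast_heq _ _
    rw [mem_interior]
    refine ⟨Λ.ZZ (g.1.1.seg 0 p (zle p)) ν', ?_, ?_, ?_⟩
    · rintro g' ⟨x, hx1, hx2, -⟩
      have hx2' : Λ.IsPrepend (g.1.1.seg 0 q (zle q)) x g'.1.2.2 :=
        (isPrepend_congr Λ rfl e hν'heq).mp hx2
      exact hcyc.2 x g'.1.1 g'.1.2.2 hx1 hx2'
    · exact TopologicalSpace.isOpen_generateFrom_of_mem ⟨_, _, _, _, _, rfl⟩
    · refine ⟨Λ.shift p g.1.1, prepend_self Λ g.1.1 p, ?_, ?_⟩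
      · rw [← hyy]
        apply (isPrepend_congr Λ rfl e hν'heq).mpr
        rw [hshpq]
        exact prepend_self Λ g.1.1 q
      · intro i
        have d1 : Λ.d (g.1.1.seg 0 p (zle p)) = p := d_seg0 Λ _ _ _
        have d2 : Λ.d ν' = q := (d_heq Λ rfl e hν'heq).trans (d_seg0 Λ _ _ _)
        rw [d1, d2]
        exact hdeg i
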